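/- arXiv:2303.08668 — 10 statements merged into one kernel-verified Lean document; each statement's English description precedes it below -/
import Mathlib

section
/- Let L be an N×N real symmetric matrix with zero row sums and let C ⊆ {1,...,N} have k ≥ 2 elements. Then the following two statements are equivalent: (1) C is a strong equitable cluster of L, i.e. L_{pj} = L_{qj} for all p, q ∈ C and all j ∉ C; (2) there exists an orthonormal basis v₁, v₂, ..., v_N of ℝ^N consisting of eigenvectors of L, with v₁ = (1/√N)(1,1,...,1)ᵀ, which contains a spectral block of k−1 eigenvectors localized at C. -/
open Matrix
open Module

private theorem bwd_aux (N : ℕ) (L : Matrix (Fin N) (Fin N) ℝ) (C : Finset (Fin N))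
    (v : Fin N → (Fin N → ℝ)) (μ : Fin N → ℝ) (S : Finset (Fin N))
    (horth : ∀ i j, v i ⬝ᵥ v j = if i = j then 1 else 0)
    (heig : ∀ i, L.mulVec (v i) = μ i • v i)
    (hS0 : ∀ i ∈ S, ∀ j ∉ C, v i j = 0)
    (hSc : ∀ i ∉ S, ∀ p ∈ C, ∀ q ∈ C, v i p = v i q) :
    ∀ p ∈ C, ∀ q ∈ C, ∀ j ∉ C, L p j = L q j := by
  have key : ∀ p j, L p j = ∑ i, μ i * v i p * v i j := by
    intro p j
    set V : Matrix (Fin N) (Fin N) ℝ := Matrix.of v with hV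
    have hVV : V * Vᵀ = 1 := by
      ext i j
      simpa [hV, Matrix.mul_apply, Matrix.one_apply, dotProduct] using horth i j
    have hVtV : Vᵀ * V = 1 := mul_eq_one_comm.mp hVV
    calc L p j = ((L * Vᵀ) * V) p j := by rw [Matrix.mul_assoc, hVtV, Matrix.mul_one]
      _ = ∑ i, (∑ r, L p r * v i r) * v i j := by
          simp [Matrix.mul_apply, hV]
      _ = ∑ i, μ i * v i p * v i j := by
          refine Finset.sum_congr rfl fun i _ => ?_
          have h := congrFun (heig i) p
          simp only [Matrix.mulVec, dotProduct, Pi.smul_apply, smul_eq_mul] at h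
          rw [h]
  intro p hp q hq j hj
  rw [key p j, key q j]
  refine Finset.sum_congr rfl fun i _ => ?_
  by_cases hiS : i ∈ S
  · rw [hS0 i hiS j hj]; ring
  · rw [hSc i hiS p hp q hq]

notation "⟪" x ", " y "⟫" => inner (𝕜 := ℝ) x y

set_option maxHeartbeats 2000000 in
private theorem sec_spectral_forward_aux (N : ℕ) [NeZero N] (L : Matrix (Fin N) (Fin N) ℝ)
    (hsym : L.IsSymm) (hrow : ∀ i, ∑ j, L i j = 0)
    (C : Finset (Fin N)) (hk : 2 ≤ C.card)
    (hSEC : ∀ p ∈ C, ∀ q ∈ C, ∀ j ∉ C, L p j = L q j) :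
    ∃ (v : Fin N → (Fin N → ℝ)) (μ : Fin N → ℝ) (S : Finset (Fin N)),
      (∀ i j, v i ⬝ᵥ v j = if i = j then 1 else 0) ∧
      (∀ i, L.mulVec (v i) = μ i • v i) ∧
      (v 0 = fun _ => 1 / Real.sqrt N) ∧
      S.card = C.card - 1 ∧ (0 : Fin N) ∉ S ∧
      (∀ i ∈ S, ∀ j ∉ C, v i j = 0) ∧
      (∀ i ∉ S, ∀ p ∈ C, ∀ q ∈ C, v i p = v i q) := by
  have hkN : C.card ≤ N := by simpa using C.card_le_univ
  obtain ⟨p₀, hp₀⟩ : ∃ p, p ∈ C := Finset.card_pos.mp (by omega)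
  -- the operator
  set T : EuclideanSpace ℝ (Fin N) →ₗ[ℝ] EuclideanSpace ℝ (Fin N) :=
    { toFun := fun x => WithLp.toLp 2 (L.mulVec x)
      map_add' := fun x y => by ext i; simp [Matrix.mulVec_add]
      map_smul' := fun c x => by ext i; simp [Matrix.mulVec_smul] } with hT
  have inner_eq : ∀ x y : EuclideanSpace ℝ (Fin N), ⟪x, y⟫ = ∑ i, x i * y i := by
    intro x y
    simp [PiLp.inner_apply, RCLike.inner_apply, mul_comm]
  have hcol : ∀ r, ∑ j, L j r = 0 := by
    intro r
    calc ∑ j, L j r = ∑ j, L r j := Finset.sum_congr rfl fun j _ => hsym.apply r j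
      _ = 0 := hrow r
  have hTsymm : T.IsSymmetric := by
    intro x y
    rw [inner_eq, inner_eq]
    show ∑ i, L.mulVec x i * y i = ∑ i, x i * L.mulVec y i
    calc ∑ i, L.mulVec x i * y i = L.mulVec x ⬝ᵥ y := rfl
      _ = x ⬝ᵥ L.mulVec y := by
          conv_rhs => rw [← hsym.eq]
          rw [Matrix.dotProduct_mulVec, Matrix.vecMul_transpose]
      _ = ∑ i, x i * L.mulVec y i := rfl
  -- the subspace W
  set f : EuclideanSpace ℝ (Fin N) →ₗ[ℝ] ({j : Fin N // j ∉ C} → ℝ) × ℝ :=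
    { toFun := fun x => (fun j => x j.1, ∑ i ∈ C, x i)
      map_add' := by
        intro x y
        refine Prod.ext (funext fun j => rfl) ?_
        simp [Finset.sum_add_distrib]
      map_smul' := by
        intro c x
        refine Prod.ext (funext fun j => rfl) ?_
        simp [Finset.mul_sum] } with hf
  set W : Submodule ℝ (EuclideanSpace ℝ (Fin N)) := LinearMap.ker f with hWdef
  have mem_W : ∀ x : EuclideanSpace ℝ (Fin N),
      x ∈ W ↔ ((∀ j ∉ C, x j = 0) ∧ ∑ i ∈ C, x i = 0) := by
    intro x
    rw [hWdef, LinearMap.mem_ker]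
    constructor
    · intro h
      have h1 := congrArg Prod.fst h
      have h2 := congrArg Prod.snd h
      exact ⟨fun j hj => congrFun h1 ⟨j, hj⟩, h2⟩
    · rintro ⟨h1, h2⟩
      exact Prod.ext (funext fun j => h1 j.1 j.2) h2
  have hW_dim : finrank ℝ W = C.card - 1 := by
    have hsurj : Function.Surjective f := by
      rintro ⟨g, s⟩
      refine ⟨WithLp.toLp 2 (fun j => if h : j ∈ C then (if j = p₀ then s else 0) else g ⟨j, h⟩), ?_⟩
      refine Prod.ext (funext fun j => ?_) ?_
      · exact dif_neg j.2
      · show (∑ i ∈ C, if h : i ∈ C then (if i = p₀ then s else 0) else g ⟨i, h⟩) = s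
        have he : (∑ i ∈ C, if h : i ∈ C then (if i = p₀ then s else 0) else g ⟨i, h⟩)
            = ∑ i ∈ C, (if i = p₀ then s else 0) :=
          Finset.sum_congr rfl (fun i hi => dif_pos hi)
        rw [he, Finset.sum_ite_eq' C p₀ (fun _ => s), if_pos hp₀]
    have hrange : LinearMap.range f = ⊤ := LinearMap.range_eq_top.mpr hsurj
    have hrn := LinearMap.finrank_range_add_finrank_ker f
    rw [hrange, finrank_top] at hrn
    have hcodom : finrank ℝ (({j : Fin N // j ∉ C} → ℝ) × ℝ) = (N - C.card) + 1 := by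
      rw [Module.finrank_prod, Module.finrank_pi, Module.finrank_self]
      congr 1
      rw [Fintype.card_subtype]
      simp [Finset.filter_not, Finset.card_univ_diff]
    rw [hcodom, finrank_euclideanSpace, Fintype.card_fin] at hrn
    rw [hWdef]
    omega
  -- the all-ones vector
  set u : EuclideanSpace ℝ (Fin N) := WithLp.toLp 2 (fun _ => 1) with hu
  have hu_ne : u ≠ 0 := by
    intro h
    have := congrArg (fun x : EuclideanSpace ℝ (Fin N) => x (⟨0, Nat.pos_of_ne_zero (NeZero.ne N)⟩ : Fin N)) h
    simpa [hu] using this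
  have hTu : T u = 0 := by
    ext i
    show L.mulVec u i = 0
    simpa [Matrix.mulVec, dotProduct, hu] using hrow i
  have huW : u ∈ Wᗮ := by
    rw [Submodule.mem_orthogonal]
    intro w hw
    rw [mem_W] at hw
    rw [inner_eq]
    simp only [hu, mul_one]
    rw [← Finset.sum_subset (Finset.subset_univ C) (fun x _ hx => hw.1 x hx)]
    exact hw.2
  -- invariance of W
  have hTW : ∀ x ∈ W, T x ∈ W := by
    intro x hx
    rw [mem_W] at hx
    have hoff : ∀ j ∉ C, T x j = 0 := by
      intro j hj
      show L.mulVec x j = 0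
      show ∑ r, L j r * x r = 0
      rw [← Finset.sum_subset (Finset.subset_univ C)
        (fun r _ hr => by rw [hx.1 r hr, mul_zero])]
      calc ∑ r ∈ C, L j r * x r = ∑ r ∈ C, L j p₀ * x r := by
            refine Finset.sum_congr rfl fun r hr => ?_
            rw [show L j r = L j p₀ by
              rw [hsym.apply r j, hsym.apply p₀ j]
              exact hSEC r hr p₀ hp₀ j hj]
        _ = 0 := by rw [← Finset.mul_sum, hx.2, mul_zero]
    rw [mem_W]
    refine ⟨hoff, ?_⟩
    have htot : ∑ j, T x j = 0 := by
      show ∑ j, L.mulVec x j = 0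
      show ∑ j, ∑ r, L j r * x r = 0
      rw [Finset.sum_comm]
      calc ∑ r, ∑ j, L j r * x r = ∑ r, (∑ j, L j r) * x r := by
            simp [Finset.sum_mul]
        _ = 0 := by simp [hcol]
    rw [Finset.sum_subset (Finset.subset_univ C) (fun x₁ _ hx₁ => hoff x₁ hx₁)]
    exact htot
  -- orthogonal complements are constant on C
  have hconst : ∀ x ∈ Wᗮ, ∀ p ∈ C, ∀ q ∈ C, x p = x q := by
    intro x hx p hp q hq
    set w : EuclideanSpace ℝ (Fin N) :=
      WithLp.toLp 2 (fun r => (if r = p then (1:ℝ) else 0) - (if r = q then 1 else 0)) with hw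
    have hwW : w ∈ W := by
      rw [mem_W]
      constructor
      · intro j hj
        have hjp : j ≠ p := fun h => hj (h ▸ hp)
        have hjq : j ≠ q := fun h => hj (h ▸ hq)
        simp [hw, hjp, hjq]
      · simp [hw, Finset.sum_sub_distrib, Finset.sum_ite_eq' C, hp, hq]
    have h0 := (Submodule.mem_orthogonal W x).mp hx w hwW
    rw [inner_eq] at h0
    simp only [hw, sub_mul, ite_mul, one_mul, zero_mul, Finset.sum_sub_distrib,
      Finset.sum_ite_eq' Finset.univ, Finset.mem_univ, if_pos] at h0
    linarith
  -- invariance of orthogonal complements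
  have hTWperp : ∀ x ∈ Wᗮ, T x ∈ Wᗮ := by
    intro x hx
    rw [Submodule.mem_orthogonal]
    intro w hw
    rw [real_inner_comm, hTsymm x w, real_inner_comm]
    exact (Submodule.mem_orthogonal W x).mp hx (T w) (hTW w hw)
  set uspan : Submodule ℝ (EuclideanSpace ℝ (Fin N)) := ℝ ∙ u with huspan
  have hTuspanperp : ∀ x ∈ uspanᗮ, T x ∈ uspanᗮ := by
    intro x hx
    rw [Submodule.mem_orthogonal]
    intro y hy
    obtain ⟨c, rfl⟩ := Submodule.mem_span_singleton.mp hy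
    rw [real_inner_comm, hTsymm x (c • u), LinearMap.map_smul, hTu, smul_zero,
      inner_zero_right]
  set U : Submodule ℝ (EuclideanSpace ℝ (Fin N)) := Wᗮ ⊓ uspanᗮ with hU
  have hTU : ∀ x ∈ U, T x ∈ U := by
    intro x hx
    exact ⟨hTWperp x hx.1, hTuspanperp x hx.2⟩
  have hU_dim : finrank ℝ U = N - C.card := by
    have h1 : finrank ℝ Wᗮ = N - (C.card - 1) := by
      have := Submodule.finrank_add_finrank_orthogonal W
      rw [hW_dim, finrank_euclideanSpace, Fintype.card_fin] at this
      omega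
    have h2 : finrank ℝ uspan = 1 := finrank_span_singleton hu_ne
    have h3 : finrank ℝ uspanᗮ = N - 1 := by
      have := Submodule.finrank_add_finrank_orthogonal uspan
      rw [h2, finrank_euclideanSpace, Fintype.card_fin] at this
      omega
    have hsup : Wᗮ ⊔ uspanᗮ = ⊤ := by
      have hle : uspan ≤ Wᗮ := (Submodule.span_singleton_le_iff_mem u Wᗮ).mpr huW
      have := Submodule.sup_orthogonal_of_hasOrthogonalProjection (K := uspan)
      rw [eq_top_iff, ← this]
      exact sup_le_sup_right hle _
    have h4 := Submodule.finrank_sup_add_finrank_inf_eq Wᗮ uspanᗮ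
    rw [hsup, ← hU, finrank_top, finrank_euclideanSpace, Fintype.card_fin, h1, h3] at h4
    omega
  -- spectral theorem on W and U
  have hrestr_symm : ∀ (K : Submodule ℝ (EuclideanSpace ℝ (Fin N)))
      (hK : ∀ x ∈ K, T x ∈ K), (T.restrict hK).IsSymmetric := by
    intro K hK x y
    rw [Submodule.coe_inner, Submodule.coe_inner, LinearMap.restrict_coe_apply,
      LinearMap.restrict_coe_apply]
    exact hTsymm x y
  set b₁ := (hrestr_symm W hTW).eigenvectorBasis hW_dim with hb₁
  set b₂ := (hrestr_symm U hTU).eigenvectorBasis hU_dim with hb₂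
  have hb₁_eig : ∀ a, T ((b₁ a : EuclideanSpace ℝ (Fin N)))
      = ((hrestr_symm W hTW).eigenvalues hW_dim a) • (b₁ a : EuclideanSpace ℝ (Fin N)) := by
    intro a
    have := (hrestr_symm W hTW).apply_eigenvectorBasis hW_dim a
    have h2 := congrArg (Subtype.val) this
    rw [LinearMap.restrict_coe_apply] at h2
    rw [h2]
    norm_num
    rfl
  have hb₂_eig : ∀ a, T ((b₂ a : EuclideanSpace ℝ (Fin N)))
      = ((hrestr_symm U hTU).eigenvalues hU_dim a) • (b₂ a : EuclideanSpace ℝ (Fin N)) := by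
    intro a
    have := (hrestr_symm U hTU).apply_eigenvectorBasis hU_dim a
    have h2 := congrArg (Subtype.val) this
    rw [LinearMap.restrict_coe_apply] at h2
    rw [h2]
    norm_num
    rfl
  have hb₁_on : ∀ a c, ⟪((b₁ a : EuclideanSpace ℝ (Fin N))), ((b₁ c : EuclideanSpace ℝ (Fin N)))⟫
      = if a = c then 1 else 0 := by
    intro a c
    rw [← Submodule.coe_inner]
    exact orthonormal_iff_ite.mp b₁.orthonormal a c
  have hb₂_on : ∀ a c, ⟪((b₂ a : EuclideanSpace ℝ (Fin N))), ((b₂ c : EuclideanSpace ℝ (Fin N)))⟫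
      = if a = c then 1 else 0 := by
    intro a c
    rw [← Submodule.coe_inner]
    exact orthonormal_iff_ite.mp b₂.orthonormal a c
  -- the candidate family
  set v : Fin N → (Fin N → ℝ) := fun i =>
    if h0 : (i : ℕ) = 0 then (fun _ => 1 / Real.sqrt N)
    else if hik : (i : ℕ) < C.card then
      (b₁ ⟨(i : ℕ) - 1, by omega⟩ : EuclideanSpace ℝ (Fin N))
    else (b₂ ⟨(i : ℕ) - C.card, by have := i.isLt; omega⟩ : EuclideanSpace ℝ (Fin N)) with hv
  set toE : (Fin N → ℝ) → EuclideanSpace ℝ (Fin N) := fun x => WithLp.toLp 2 x with htoE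
  set μ : Fin N → ℝ := fun i =>
    if h0 : (i : ℕ) = 0 then 0
    else if hik : (i : ℕ) < C.card then
      (hrestr_symm W hTW).eigenvalues hW_dim ⟨(i : ℕ) - 1, by omega⟩
    else (hrestr_symm U hTU).eigenvalues hU_dim
      ⟨(i : ℕ) - C.card, by have := i.isLt; omega⟩ with hμ
  set S : Finset (Fin N) :=
    (Finset.Ico 1 C.card).attachFin
      (fun m hm => lt_of_lt_of_le (Finset.mem_Ico.mp hm).2 hkN) with hS
  have hval0 : ((0 : Fin N) : ℕ) = 0 := by simp
  have hv0 : v 0 = fun _ => 1 / Real.sqrt N := by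
    simp only [hv]
    exact dif_pos hval0
  have hv1 : ∀ i : Fin N, (i : ℕ) ≠ 0 → (i : ℕ) < C.card →
      ∃ a : Fin (C.card - 1), (a : ℕ) = (i : ℕ) - 1 ∧
        toE (v i) = ((b₁ a : W) : EuclideanSpace ℝ (Fin N)) := by
    intro i hi0 hik
    refine ⟨⟨(i : ℕ) - 1, by omega⟩, rfl, ?_⟩
    show WithLp.toLp 2 (v i) = _
    rw [hv]
    simp only [dif_neg hi0, dif_pos hik]
  have hv2 : ∀ i : Fin N, (i : ℕ) ≠ 0 → ¬ (i : ℕ) < C.card →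
      ∃ a : Fin (N - C.card), (a : ℕ) = (i : ℕ) - C.card ∧
        toE (v i) = ((b₂ a : U) : EuclideanSpace ℝ (Fin N)) := by
    intro i hi0 hik
    refine ⟨⟨(i : ℕ) - C.card, by have := i.isLt; omega⟩, rfl, ?_⟩
    show WithLp.toLp 2 (v i) = _
    rw [hv]
    simp only [dif_neg hi0, dif_neg hik]
  have hvE0' : toE (v 0) = (Real.sqrt N)⁻¹ • u := by
    ext r
    show v 0 r = (Real.sqrt N)⁻¹ * 1
    rw [hv0, mul_one, one_div]
  have hv0_mem : toE (v 0) ∈ Wᗮ ∧ toE (v 0) ∈ uspan := by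
    rw [hvE0']
    exact ⟨Submodule.smul_mem _ _ huW,
      Submodule.smul_mem _ _ (Submodule.mem_span_singleton_self u)⟩
  have hnorm0 : ⟪toE (v 0), toE (v 0)⟫ = 1 := by
    rw [inner_eq]
    have hNpos : (0:ℝ) < (N:ℝ) := by
      have := Nat.pos_of_ne_zero (NeZero.ne N)
      exact_mod_cast this
    have h1 : ∀ r, toE (v 0) r = 1 / Real.sqrt N := fun r => congrFun hv0 r
    simp only [h1, Finset.sum_const, Finset.card_univ, Fintype.card_fin, nsmul_eq_mul]
    rw [div_mul_div_comm, one_mul, Real.mul_self_sqrt (le_of_lt hNpos)]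
    field_simp
  -- orthogonality helpers
  have horthW : ∀ (x y : EuclideanSpace ℝ (Fin N)), x ∈ W → y ∈ Wᗮ → ⟪x, y⟫ = 0 :=
    fun x y hx hy => (Submodule.mem_orthogonal W y).mp hy x hx
  have horthu : ∀ (x y : EuclideanSpace ℝ (Fin N)), x ∈ uspan → y ∈ uspanᗮ → ⟪x, y⟫ = 0 :=
    fun x y hx hy => (Submodule.mem_orthogonal uspan y).mp hy x hx
  -- the full orthonormality
  have horthv : ∀ i j, ⟪toE (v i), toE (v j)⟫ = if i = j then 1 else 0 := by
    have key : ∀ i j : Fin N, (i : ℕ) ≤ (j : ℕ) →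
        ⟪toE (v i), toE (v j)⟫ = if i = j then 1 else 0 := by
      intro i j hij
      by_cases hi0 : (i : ℕ) = 0
      · by_cases hj0 : (j : ℕ) = 0
        · have heq : i = j := Fin.ext (by omega)
          subst heq
          have heq0 : i = 0 := Fin.ext (by omega)
          subst heq0
          rw [if_pos rfl]
          exact hnorm0
        · have hne : i ≠ j := fun h => hj0 (by rw [← h]; exact hi0)
          rw [if_neg hne]
          have heq0 : i = 0 := Fin.ext (by omega)
          subst heq0
          by_cases hjk : (j : ℕ) < C.card
          · obtain ⟨a, -, ha⟩ := hv1 j hj0 hjk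
            rw [ha, real_inner_comm]
            exact horthW _ _ (SetLike.coe_mem _) hv0_mem.1
          · obtain ⟨a, -, ha⟩ := hv2 j hj0 hjk
            rw [ha]
            exact horthu _ _ hv0_mem.2 (SetLike.coe_mem (b₂ a) : _ ∈ U).2
      · have hj0 : (j : ℕ) ≠ 0 := by omega
        by_cases hik : (i : ℕ) < C.card
        · obtain ⟨a, ha', ha⟩ := hv1 i hi0 hik
          by_cases hjk : (j : ℕ) < C.card
          · -- both in block 1
            obtain ⟨c, hc', hc⟩ := hv1 j hj0 hjk
            rw [ha, hc, hb₁_on]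
            by_cases hij' : i = j
            · subst hij'
              have hac : a = c := Fin.ext (by omega)
              rw [if_pos hac, if_pos rfl]
            · have hvne : (i : ℕ) ≠ (j : ℕ) := fun h => hij' (Fin.ext h)
              have hac : a ≠ c := by
                intro h
                apply hvne
                have h1 := congrArg Fin.val h
                omega
              rw [if_neg hac, if_neg hij']
          · -- block 1 vs block 2
            obtain ⟨c, -, hc⟩ := hv2 j hj0 hjk
            have hne : i ≠ j := fun h => hjk (h ▸ hik)
            rw [if_neg hne, ha, hc]
            exact horthW _ _ (SetLike.coe_mem _) (SetLike.coe_mem (b₂ c) : _ ∈ U).1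
        · -- both in block 2 (since i ≤ j)
          have hjk : ¬ (j : ℕ) < C.card := by omega
          obtain ⟨a, ha', ha⟩ := hv2 i hi0 hik
          obtain ⟨c, hc', hc⟩ := hv2 j hj0 hjk
          rw [ha, hc, hb₂_on]
          by_cases hij' : i = j
          · subst hij'
            have hac : a = c := Fin.ext (by omega)
            rw [if_pos hac, if_pos rfl]
          · have hvne : (i : ℕ) ≠ (j : ℕ) := fun h => hij' (Fin.ext h)
            have hac : a ≠ c := by
              intro h
              apply hvne
              have h1 := congrArg Fin.val h
              omega
            rw [if_neg hac, if_neg hij']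
    intro i j
    rcases le_total (i : ℕ) (j : ℕ) with h | h
    · exact key i j h
    · rw [real_inner_comm, key j i h]
      by_cases hij : i = j
      · rw [if_pos hij.symm, if_pos hij]
      · rw [if_neg (fun h' => hij h'.symm), if_neg hij]
  -- eigenvector property
  have heigv : ∀ i, L.mulVec (v i) = μ i • v i := by
    intro i
    by_cases hi0 : (i : ℕ) = 0
    · rw [hv, hμ]
      simp only [dif_pos hi0]
      funext r
      show ∑ t, L r t * (1 / Real.sqrt N) = ((0:ℝ) • fun _ : Fin N => 1 / Real.sqrt N) r
      rw [← Finset.sum_mul, hrow r, zero_mul]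
      simp
    · by_cases hik : (i : ℕ) < C.card
      · rw [hv, hμ]
        simp only [dif_neg hi0, dif_pos hik]
        exact congrArg WithLp.ofLp (hb₁_eig _)
      · rw [hv, hμ]
        simp only [dif_neg hi0, dif_neg hik]
        exact congrArg WithLp.ofLp (hb₂_eig _)
  refine ⟨v, μ, S, ?_, heigv, hv0, ?_, ?_, ?_, ?_⟩
  · intro i j
    rw [show (v i ⬝ᵥ v j) = ⟪toE (v i), toE (v j)⟫ from (inner_eq (toE (v i)) (toE (v j))).symm, horthv i j]
  · rw [hS, Finset.card_attachFin, Nat.card_Ico]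
  · rw [hS]
    intro hmem
    rw [Finset.mem_attachFin, hval0, Finset.mem_Ico] at hmem
    omega
  · intro i hiS j hj
    rw [hS, Finset.mem_attachFin, Finset.mem_Ico] at hiS
    have hi0 : (i : ℕ) ≠ 0 := by omega
    obtain ⟨a, -, ha⟩ := hv1 i hi0 hiS.2
    have hmem : toE (v i) ∈ W := by rw [ha]; exact SetLike.coe_mem _
    exact ((mem_W _).mp hmem).1 j hj
  · intro i hiS p hp q hq
    rw [hS, Finset.mem_attachFin, Finset.mem_Ico] at hiS
    by_cases hi0 : (i : ℕ) = 0
    · have heq0 : i = 0 := Fin.ext (by omega)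
      subst heq0
      rw [hv0]
    · have hik : ¬ (i : ℕ) < C.card := by omega
      obtain ⟨a, -, ha⟩ := hv2 i hi0 hik
      have hmem : toE (v i) ∈ Wᗮ := by
        rw [ha]
        exact (SetLike.coe_mem (b₂ a) : _ ∈ U).1
      exact hconst _ hmem p hp q hq

/-- For an N×N real symmetric matrix L with zero row sums and a subset
C of the indices with k ≥ 2 elements, C is a strong equitable cluster of L iff there
is an orthonormal eigenbasis v₀,...,v_{N-1} of L with v₀ = (1/√N)(1,...,1)ᵀ containing
a spectral block of k−1 eigenvectors localized at C. -/
theorem strong_equitable_cluster_iff_spectral_block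
    (N : ℕ) [NeZero N] (L : Matrix (Fin N) (Fin N) ℝ)
    (hsym : L.IsSymm) (hrow : ∀ i, ∑ j, L i j = 0)
    (C : Finset (Fin N)) (hk : 2 ≤ C.card) :
    (∀ p ∈ C, ∀ q ∈ C, ∀ j ∉ C, L p j = L q j) ↔
    ∃ (v : Fin N → (Fin N → ℝ)) (μ : Fin N → ℝ) (S : Finset (Fin N)),
      -- v is an orthonormal basis of ℝ^N ...
      (∀ i j, v i ⬝ᵥ v j = if i = j then 1 else 0) ∧
      -- ... consisting of eigenvectors of L ...
      (∀ i, L.mulVec (v i) = μ i • v i) ∧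
      -- ... with the first eigenvector the constant vector (1/√N)(1,...,1)ᵀ ...
      (v 0 = fun _ => 1 / Real.sqrt N) ∧
      -- ... containing a spectral block S of k−1 eigenvectors (not including v₀)
      S.card = C.card - 1 ∧ (0 : Fin N) ∉ S ∧
      -- localized at C: eigenvectors in S vanish outside C ...
      (∀ i ∈ S, ∀ j ∉ C, v i j = 0) ∧
      -- ... and eigenvectors not in S are constant on C
      (∀ i ∉ S, ∀ p ∈ C, ∀ q ∈ C, v i p = v i q) := by
  constructor
  · exact sec_spectral_forward_aux N L hsym hrow C hk
  · rintro ⟨v, μ, S, h1, h2, h3, h4, h5, h6, h7⟩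
    exact bwd_aux N L C v μ S h1 h2 h6 h7
end

section
/- Let L be an N×N real symmetric matrix with zero row sums and let C ⊆ {1,...,N} be a strong equitable cluster of L with k ≥ 2 elements. Then L admits k−1 pairwise orthonormal eigenvectors u₂, ..., u_k such that each u_i has all entries at positions outside C equal to zero and the entries of each u_i sum to zero. -/
open Matrix

noncomputable section SECAux

variable (N : ℕ) (C : Finset (Fin N))

/-- The subspace of vectors supported on `C` with zero entry sum. -/
def secSpace : Submodule ℝ (EuclideanSpace ℝ (Fin N)) where
  carrier := {x | (∀ j ∉ C, x j = 0) ∧ ∑ j, x j = 0}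
  add_mem' := by
    rintro x y ⟨hx1, hx2⟩ ⟨hy1, hy2⟩
    refine ⟨fun j hj => ?_, ?_⟩
    · show x j + y j = 0
      rw [hx1 j hj, hy1 j hj, add_zero]
    · show ∑ j, (x j + y j) = 0
      rw [Finset.sum_add_distrib, hx2, hy2, add_zero]
  zero_mem' := by
    refine ⟨fun j _ => rfl, ?_⟩
    simp
  smul_mem' := by
    rintro c x ⟨hx1, hx2⟩
    refine ⟨fun j hj => ?_, ?_⟩
    · show c * x j = 0
      rw [hx1 j hj, mul_zero]
    · show ∑ j, c * x j = 0
      rw [← Finset.mul_sum, hx2, mul_zero]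

lemma mem_secSpace {x : EuclideanSpace ℝ (Fin N)} :
    x ∈ secSpace N C ↔ (∀ j ∉ C, x j = 0) ∧ ∑ j, x j = 0 := Iff.rfl

/-- The sum functional on functions on `C`. -/
def secSum : (↥C → ℝ) →ₗ[ℝ] ℝ where
  toFun y := ∑ c, y c
  map_add' := by intro x y; simp [Finset.sum_add_distrib]
  map_smul' := by intro c x; simp [Finset.mul_sum]

lemma secSum_apply (y : ↥C → ℝ) : secSum N C y = ∑ c, y c := rfl

lemma sum_ext (y : LinearMap.ker (secSum N C)) :
    ∑ j, (if h : j ∈ C then y.1 ⟨j, h⟩ else 0) = 0 := by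
  classical
  have h0 : ∑ j, (if h : j ∈ C then y.1 ⟨j, h⟩ else 0)
      = ∑ j ∈ C, (if h : j ∈ C then y.1 ⟨j, h⟩ else 0) :=
    (Finset.sum_subset (Finset.subset_univ C) (fun j _ hj => dif_neg hj)).symm
  rw [h0, Finset.sum_dite_of_true (fun j h => h)]
  have := y.2
  rw [LinearMap.mem_ker, secSum_apply] at this
  rw [← this]

/-- `secSpace` is linearly equivalent to the kernel of the sum functional on `C → ℝ`. -/
def secEquiv : secSpace N C ≃ₗ[ℝ] LinearMap.ker (secSum N C) where
  toFun x := ⟨fun c => x.1 c, by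
    rw [LinearMap.mem_ker, secSum_apply]
    have h1 : (∑ c : C, x.1 c) = ∑ j ∈ C, x.1 j := Finset.sum_coe_sort C x.1
    have h2 : ∑ j ∈ C, x.1 j = ∑ j, x.1 j :=
      Finset.sum_subset (Finset.subset_univ C) (fun j _ hj => x.2.1 j hj)
    rw [h1, h2, x.2.2]⟩
  invFun y := ⟨WithLp.toLp 2 (fun j => if h : j ∈ C then y.1 ⟨j, h⟩ else 0),
    fun j hj => dif_neg hj, sum_ext N C y⟩
  map_add' x y := rfl
  map_smul' c x := rfl
  left_inv x := by
    apply Subtype.ext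
    ext j
    show (if h : j ∈ C then x.1 j else 0) = x.1 j
    by_cases h : j ∈ C
    · rw [dif_pos h]
    · rw [dif_neg h, x.2.1 j h]
  right_inv y := by
    apply Subtype.ext
    funext c
    exact dif_pos c.2

lemma secSum_surjective (hC : C.Nonempty) : Function.Surjective (secSum N C) := by
  classical
  obtain ⟨c₀, hc₀⟩ := hC
  intro r
  refine ⟨fun c => if c = ⟨c₀, hc₀⟩ then r else 0, ?_⟩
  rw [secSum_apply]
  simp

lemma finrank_secSpace (hC : C.Nonempty) :
    Module.finrank ℝ (secSpace N C) = C.card - 1 := by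
  rw [LinearEquiv.finrank_eq (secEquiv N C)]
  have h := LinearMap.finrank_range_add_finrank_ker (secSum N C)
  rw [LinearMap.range_eq_top.mpr (secSum_surjective N C hC)] at h
  have htop : Module.finrank ℝ (⊤ : Submodule ℝ ℝ) = 1 := by
    rw [finrank_top]; exact Module.finrank_self ℝ
  rw [htop] at h
  have hdom : Module.finrank ℝ (↥C → ℝ) = C.card := by
    rw [Module.finrank_pi]
    simp
  omega

end SECAux

/-- If C is a strong equitable cluster with k ≥ 2 elements of an N×N real
symmetric matrix L with zero row sums, then L admits k−1 pairwise orthonormal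
eigenvectors, each supported on C and with entries summing to zero. -/
theorem sec_admits_orthonormal_localized_eigenvectors
    (N : ℕ) (L : Matrix (Fin N) (Fin N) ℝ)
    (hsym : L.IsSymm) (hrow : ∀ i, ∑ j, L i j = 0)
    (C : Finset (Fin N)) (hk : 2 ≤ C.card)
    (hSEC : ∀ p ∈ C, ∀ q ∈ C, ∀ j ∉ C, L p j = L q j) :
    ∃ (u : Fin (C.card - 1) → (Fin N → ℝ)) (μ : Fin (C.card - 1) → ℝ),
      (∀ a b, u a ⬝ᵥ u b = if a = b then 1 else 0) ∧
      (∀ a, L.mulVec (u a) = μ a • u a) ∧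
      (∀ a, ∀ j ∉ C, u a j = 0) ∧
      (∀ a, ∑ j, u a j = 0) := by
  classical
  have hC : C.Nonempty := Finset.card_pos.mp (by omega)
  -- column sums vanish
  have hcol : ∀ j, ∑ i, L i j = 0 := by
    intro j
    have : ∀ i, L i j = L j i := fun i => by
      conv_lhs => rw [← hsym]
      rfl
    simp_rw [this]
    exact hrow j
  -- invariance of secSpace under L
  have hV : ∀ x ∈ secSpace N C, Matrix.toEuclideanLin L x ∈ secSpace N C := by
    intro x hx
    obtain ⟨hx1, hx2⟩ := hx
    have hmul : ∀ j, (Matrix.toEuclideanLin L x) j = ∑ p, L j p * x p := fun j => rfl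
    constructor
    · intro j hj
      rw [hmul]
      have hsplit : ∑ p, L j p * x p = ∑ p ∈ C, L j p * x p :=
        (Finset.sum_subset (Finset.subset_univ C)
          (fun p _ hp => by rw [hx1 p hp, mul_zero])).symm
      obtain ⟨q₀, hq₀⟩ := hC
      have hconst : ∀ p ∈ C, L j p * x p = L j q₀ * x p := by
        intro p hp
        have h1 : L j p = L p j := congrFun (congrFun hsym.symm j) p
        have h2 : L j q₀ = L q₀ j := congrFun (congrFun hsym.symm j) q₀
        rw [h1, h2, hSEC p hp q₀ hq₀ j hj]
      rw [hsplit, Finset.sum_congr rfl hconst, ← Finset.mul_sum]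
      have : ∑ p ∈ C, x p = ∑ p, x p :=
        Finset.sum_subset (Finset.subset_univ C) (fun p _ hp => hx1 p hp)
      rw [this, hx2, mul_zero]
    · simp_rw [hmul]
      rw [Finset.sum_comm]
      have : ∀ p, ∑ j, L j p * x p = 0 := by
        intro p
        rw [← Finset.sum_mul, hcol p, zero_mul]
      simp_rw [this]
      simp
  -- the restricted operator
  set T : secSpace N C →ₗ[ℝ] secSpace N C := (Matrix.toEuclideanLin L).restrict hV with hT
  have hherm : L.IsHermitian := hsym
  have hTsym : T.IsSymmetric :=
    (Matrix.isHermitian_iff_isSymmetric.mp hherm).restrict_invariant hV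
  have hn : Module.finrank ℝ (secSpace N C) = C.card - 1 := finrank_secSpace N C hC
  -- spectral theorem
  set b := hTsym.eigenvectorBasis hn with hb
  set μ := hTsym.eigenvalues hn with hμ
  refine ⟨fun a => ((b a : EuclideanSpace ℝ (Fin N)) : Fin N → ℝ), μ, ?_, ?_, ?_, ?_⟩
  · intro a a'
    have horth := orthonormal_iff_ite.mp b.orthonormal a a'
    have hinner : (inner ℝ (b a) (b a') : ℝ)
        = ∑ j, ((b a : EuclideanSpace ℝ (Fin N)) j) * ((b a' : EuclideanSpace ℝ (Fin N)) j) := by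
      rw [Submodule.coe_inner]
      rw [PiLp.inner_apply]
      simp [mul_comm]
    rw [hinner] at horth
    simpa [dotProduct] using horth
  · intro a
    have heig := hTsym.apply_eigenvectorBasis hn a
    have hcoe : ((T (b a) : EuclideanSpace ℝ (Fin N)) : Fin N → ℝ)
        = L.mulVec ((b a : EuclideanSpace ℝ (Fin N)) : Fin N → ℝ) := by
      rw [hT, LinearMap.restrict_coe_apply]
      rfl
    have := congrArg (fun v : secSpace N C => ((v : EuclideanSpace ℝ (Fin N)) : Fin N → ℝ)) heig
    simp only at this
    rw [hcoe] at this
    rw [this]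
    rfl
  · intro a j hj
    exact (b a).2.1 j hj
  · intro a
    exact (b a).2.2
end

section
/- Let L be an N×N real symmetric matrix with zero row sums and let C ⊆ {1,...,N} be a strong equitable cluster of L. Then the subspace U = { u ∈ ℝ^N : u_j = 0 for every j ∉ C, and Σ_{i=1}^N u_i = 0 } is invariant under L, i.e. Lu ∈ U for every u ∈ U. -/
/-- If C is a strong equitable cluster of an N×N real symmetric matrix L
with zero row sums, the subspace U = {u : u_j = 0 for j ∉ C, ∑ u_i = 0} is L-invariant. -/
theorem sec_subspace_invariant
    (N : ℕ) (L : Matrix (Fin N) (Fin N) ℝ)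
    (hsym : L.IsSymm) (hrow : ∀ i, ∑ j, L i j = 0)
    (C : Finset (Fin N)) (hk : 2 ≤ C.card)
    (hSEC : ∀ p ∈ C, ∀ q ∈ C, ∀ j ∉ C, L p j = L q j) :
    ∀ u : Fin N → ℝ, (∀ j ∉ C, u j = 0) → (∑ i, u i = 0) →
      (∀ j ∉ C, L.mulVec u j = 0) ∧ (∑ i, L.mulVec u i = 0) := by
  intro u hsupp hsum
  have hsym' : ∀ i j, L i j = L j i := fun i j => hsym.apply j i
  constructor
  · intro j hj
    obtain ⟨p₀, hp₀⟩ := Finset.card_pos.mp (lt_of_lt_of_le (by norm_num) hk)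
    have : ∀ i, L j i * u i = L p₀ j * u i := by
      intro i
      by_cases hi : i ∈ C
      · rw [hsym' j i, hSEC i hi p₀ hp₀ j hj]
      · simp [hsupp i hi]
    simp only [Matrix.mulVec, dotProduct]
    rw [Finset.sum_congr rfl (fun i _ => this i), ← Finset.mul_sum, hsum, mul_zero]
  · simp only [Matrix.mulVec, dotProduct]
    rw [Finset.sum_comm]
    have : ∀ i, ∑ j, L j i * u i = 0 := by
      intro i
      rw [← Finset.sum_mul]
      have : ∑ j, L j i = 0 := by
        rw [Finset.sum_congr rfl (fun j _ => hsym' j i), hrow i]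
      rw [this, zero_mul]
    simp [this]
end

section
/- Let L be an N×N real symmetric matrix with zero row sums, let C ⊆ {1,...,N} be a strong equitable cluster of L, and let L' be the k×k principal submatrix of L formed by the rows and columns indexed by C. Then for every u ∈ U, with u' ∈ ℝ^k denoting the restriction of u to the positions in C, and every λ ∈ ℝ, one has Lu = λu if and only if L'u' = λu'. -/
/-- For a strong equitable cluster C of an N×N real symmetric matrix L
with zero row sums, a vector u in the subspace U (supported in C, entries summing to
zero) is a λ-eigenvector of L iff its restriction u' to C is a λ-eigenvector of the
principal submatrix L' of L indexed by C. -/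
theorem sec_eigen_iff_principal_submatrix_eigen
    (N : ℕ) (L : Matrix (Fin N) (Fin N) ℝ)
    (hsym : L.IsSymm) (hrow : ∀ i, ∑ j, L i j = 0)
    (C : Finset (Fin N)) (hk : 2 ≤ C.card)
    (hSEC : ∀ p ∈ C, ∀ q ∈ C, ∀ j ∉ C, L p j = L q j)
    (u : Fin N → ℝ) (hu0 : ∀ j ∉ C, u j = 0) (husum : ∑ i, u i = 0)
    (lam : ℝ) :
    L.mulVec u = lam • u ↔
      (Matrix.of fun p q : {i // i ∈ C} => L p q).mulVec (fun p : {i // i ∈ C} => u p)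
        = lam • (fun p : {i // i ∈ C} => u p) := by
  obtain ⟨q, hq⟩ := Finset.card_pos.mp (by omega : 0 < C.card)
  have hsumC : ∑ i ∈ C, u i = 0 := by
    rw [← husum]
    apply Finset.sum_subset (Finset.subset_univ C)
    intro x _ hx
    exact hu0 x hx
  have hkey : ∀ p, ∑ i, L p i * u i = ∑ i ∈ C, L p i * u i := by
    intro p
    symm
    apply Finset.sum_subset (Finset.subset_univ C)
    intro x _ hx
    rw [hu0 x hx, mul_zero]
  have hout : ∀ j ∉ C, ∑ i, L j i * u i = 0 := by
    intro j hj
    rw [hkey]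
    have hc : ∀ i ∈ C, L j i * u i = L j q * u i := by
      intro i hi
      have h1 : L j i = L i j := hsym.apply i j
      have h2 : L i j = L q j := hSEC i hi q hq j hj
      have h3 : L q j = L j q := (hsym.apply q j).symm
      rw [h1, h2, h3]
    rw [Finset.sum_congr rfl hc, ← Finset.mul_sum, hsumC, mul_zero]
  have hsub : ∀ p : {i // i ∈ C},
      (Matrix.of fun p q : {i // i ∈ C} => L p q).mulVec (fun p : {i // i ∈ C} => u p) p
        = ∑ i, L p.1 i * u i := by
    intro p
    rw [hkey]
    simp only [Matrix.mulVec, dotProduct, Matrix.of_apply]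
    rw [← Finset.sum_coe_sort C (fun i => L p.1 i * u i)]
  constructor
  · intro h
    funext p
    have hp := congrFun h p.1
    simp only [Matrix.mulVec, dotProduct, Pi.smul_apply, smul_eq_mul] at hp
    rw [hsub p]
    simpa using hp
  · intro h
    funext j
    by_cases hj : j ∈ C
    · have hp := congrFun h ⟨j, hj⟩
      rw [hsub ⟨j, hj⟩] at hp
      simpa [Matrix.mulVec, dotProduct] using hp
    · simp [Matrix.mulVec, dotProduct, hout j hj, hu0 j hj]
end

section
/- Let L be an N×N real symmetric matrix with zero row sums, let C ⊆ {1,...,N} be a strong equitable cluster of L with common external degree d (so that Σ_{j∈C} L_{ij} = d for every i ∈ C), let L' be the principal submatrix of L indexed by C, and set L₀ := L' − d·I_k. Then for every λ ∈ ℝ: L has a nonzero eigenvector lying in U with eigenvalue λ if and only if L₀ has a nonzero eigenvector with eigenvalue λ − d whose entries sum to zero. In particular, the eigenvalues of L associated to the cluster C depend only on the subgraph induced by C and on the external degree d. -/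
/-- Let C be a strong equitable cluster of L with common external degree d
and let L₀ := L' − d·I be the Laplacian of the induced subgraph. Then L has a nonzero
λ-eigenvector in U iff L₀ has a nonzero (λ − d)-eigenvector whose entries sum to zero. -/
theorem sec_eigenvalues_depend_on_induced_subgraph
    (N : ℕ) (L : Matrix (Fin N) (Fin N) ℝ)
    (hsym : L.IsSymm) (hrow : ∀ i, ∑ j, L i j = 0)
    (C : Finset (Fin N)) (hk : 2 ≤ C.card)
    (hSEC : ∀ p ∈ C, ∀ q ∈ C, ∀ j ∉ C, L p j = L q j)
    (d : ℝ) (hd : ∀ i ∈ C, ∑ j ∈ C, L i j = d)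
    (lam : ℝ) :
    (∃ u : Fin N → ℝ, u ≠ 0 ∧ (∀ j ∉ C, u j = 0) ∧ (∑ i, u i = 0) ∧
      L.mulVec u = lam • u) ↔
    (∃ w : {i // i ∈ C} → ℝ, w ≠ 0 ∧ (∑ p, w p = 0) ∧
      ((Matrix.of fun p q : {i // i ∈ C} => L p q)
        - d • (1 : Matrix {i // i ∈ C} {i // i ∈ C} ℝ)).mulVec w = (lam - d) • w) := by
  have key : ∀ u : Fin N → ℝ, (∀ j ∉ C, u j = 0) → ∀ i,
      L.mulVec u i = ∑ q : {j // j ∈ C}, L i q * u q := by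
    intro u hsupp i
    rw [Matrix.mulVec, dotProduct,
      Finset.sum_coe_sort C (fun j => L i j * u j)]
    refine (Finset.sum_subset C.subset_univ ?_).symm
    intro x _ hx
    rw [hsupp x hx, mul_zero]
  have sumC : ∀ u : Fin N → ℝ, (∀ j ∉ C, u j = 0) →
      (∑ i, u i) = ∑ q : {j // j ∈ C}, u q := by
    intro u hsupp
    rw [Finset.sum_coe_sort C u]
    refine (Finset.sum_subset C.subset_univ ?_).symm
    intro x _ hx
    exact hsupp x hx
  constructor
  · rintro ⟨u, hu0, hsupp, hsum, heig⟩
    refine ⟨fun p => u p, ?_, ?_, ?_⟩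
    · intro h
      apply hu0
      funext j
      by_cases hj : j ∈ C
      · exact congrFun h ⟨j, hj⟩
      · exact hsupp j hj
    · rw [← sumC u hsupp, hsum]
    · funext p
      have h1 : L.mulVec u p = lam * u p := by
        rw [heig]; rfl
      rw [key u hsupp p] at h1
      show (∑ x : {i // i ∈ C}, ((Matrix.of fun p q : {i // i ∈ C} => L p q) - d • 1) p x * u x) = (lam - d) * u p
      simp only [Matrix.sub_apply, Matrix.smul_apply, Matrix.one_apply, Matrix.of_apply,
        smul_eq_mul, sub_mul, Finset.sum_sub_distrib, mul_ite, mul_one, mul_zero,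
        ite_mul, zero_mul, Finset.sum_ite_eq, Finset.mem_univ, if_true]
      linarith [h1]
  · rintro ⟨w, hw0, hwsum, hweig⟩
    classical
    set u : Fin N → ℝ := fun i => if h : i ∈ C then w ⟨i, h⟩ else 0 with hu
    have hsupp : ∀ j ∉ C, u j = 0 := by
      intro j hj; simp [hu, hj]
    have huval : ∀ p : {j // j ∈ C}, u p = w p := by
      intro p; simp [hu, p.2]
    refine ⟨u, ?_, hsupp, ?_, ?_⟩
    · intro h
      apply hw0
      funext p
      have := congrFun h (p : Fin N)
      rw [Pi.zero_apply] at this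
      rw [← huval p, this]
      rfl
    · rw [sumC u hsupp]
      rw [← hwsum]
      exact Finset.sum_congr rfl fun p _ => huval p
    · have husum : ∑ q : {j // j ∈ C}, u q = 0 := by
        rw [← sumC u hsupp, sumC u hsupp, ← hwsum]
        exact Finset.sum_congr rfl fun p _ => huval p
      funext i
      rw [key u hsupp i]
      by_cases hi : i ∈ C
      · have h1 := congrFun hweig ⟨i, hi⟩
        rw [Matrix.mulVec, dotProduct] at h1
        simp only [Matrix.sub_apply, Matrix.smul_apply, Matrix.one_apply, Matrix.of_apply,
          smul_eq_mul, sub_mul, Finset.sum_sub_distrib, mul_ite, mul_one, mul_zero,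
          ite_mul, zero_mul, Finset.sum_ite_eq, Finset.mem_univ, if_true] at h1
        rw [Pi.smul_apply, smul_eq_mul] at h1
        have h2 : ∑ q : {j // j ∈ C}, L i q * u q = lam * w ⟨i, hi⟩ := by
          have : ∑ q : {j // j ∈ C}, L i q * w q = lam * w ⟨i, hi⟩ := by
            have := h1
            -- h1 : ∑ - d * w = (lam - d) * w
            linarith [h1]
          rw [← this]
          exact Finset.sum_congr rfl fun q _ => by rw [huval q]
        rw [h2]
        have : u i = w ⟨i, hi⟩ := by simp [hu, hi]
        simp [this]
      · -- off-cluster row: entries constant on C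
        obtain ⟨p₀, hp₀⟩ := Finset.card_pos.mp (by omega : 0 < C.card)
        have hconst : ∀ q : {j // j ∈ C}, L i q = L i p₀ := by
          intro q
          have e1 : L (q : Fin N) i = L p₀ i := hSEC q q.2 p₀ hp₀ i hi
          have s1 : L i (q : Fin N) = L (q : Fin N) i := (hsym.apply _ _).symm
          have s2 : L i p₀ = L p₀ i := (hsym.apply _ _).symm
          rw [s1, s2, e1]
        have : (∑ q : {j // j ∈ C}, L i q * u q) = L i p₀ * ∑ q : {j // j ∈ C}, u q := by
          rw [Finset.mul_sum]
          exact Finset.sum_congr rfl fun q _ => by rw [hconst q]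
        rw [this, husum, mul_zero]
        have : u i = 0 := hsupp i hi
        simp [this]
end

section
/- Let L be an N×N real symmetric matrix with zero row sums and let C ⊆ {1,...,N} have k ≥ 2 elements. Then the following two statements are equivalent: (1) for every pair of indices p, q ∈ C, the transposition of p and q preserves L (i.e. its permutation matrix P satisfies P⁻¹LP = L); (2) there exists a constant c ∈ ℝ such that L_{pq} = c for all distinct p, q ∈ C (the graph induced by C is either complete with uniform weights or empty), and L_{pj} = L_{qj} for all p, q ∈ C and all j ∉ C. -/
lemma swap_permMatrix_conj_iff (N : ℕ) (L : Matrix (Fin N) (Fin N) ℝ) (p q : Fin N) :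
    (((Equiv.swap p q).permMatrix ℝ)⁻¹ * L * (Equiv.swap p q).permMatrix ℝ = L) ↔
    ∀ i j, L (Equiv.swap p q i) (Equiv.swap p q j) = L i j := by
  have hPP : ((Equiv.swap p q).permMatrix ℝ) * ((Equiv.swap p q).permMatrix ℝ) = 1 := by
    show (Equiv.swap p q).toPEquiv.toMatrix * (Equiv.swap p q).toPEquiv.toMatrix = 1
    rw [PEquiv.toMatrix_toPEquiv_mul]
    ext i j
    simp [Matrix.submatrix_apply, Equiv.toPEquiv_apply, PEquiv.toMatrix_apply, Matrix.one_apply, Equiv.swap_apply_self, eq_comm]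
  have hinv : ((Equiv.swap p q).permMatrix ℝ)⁻¹ = (Equiv.swap p q).permMatrix ℝ :=
    Matrix.inv_eq_left_inv hPP
  rw [hinv]
  show (Equiv.swap p q).toPEquiv.toMatrix * L * (Equiv.swap p q).toPEquiv.toMatrix = L ↔ _
  rw [PEquiv.toMatrix_toPEquiv_mul, PEquiv.mul_toMatrix_toPEquiv]
  constructor
  · intro h i j
    have := congrFun (congrFun h i) j
    simpa [Matrix.submatrix_apply, Equiv.symm_swap] using this
  · intro h
    ext i j
    simpa [Matrix.submatrix_apply, Equiv.symm_swap] using h i j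

/-- For a real symmetric N×N matrix L with zero row sums and a subset C
with k ≥ 2 elements: every transposition of two indices of C preserves L iff the
graph induced by C is complete with uniform weights or empty (L p q = c for all
distinct p, q ∈ C) and C is a strong equitable cluster of L. -/
theorem transpositions_preserve_iff_uniform_clique_and_sec
    (N : ℕ) (L : Matrix (Fin N) (Fin N) ℝ)
    (hsym : L.IsSymm) (hrow : ∀ i, ∑ j, L i j = 0)
    (C : Finset (Fin N)) (hk : 2 ≤ C.card) :
    (∀ p ∈ C, ∀ q ∈ C,
      ((Equiv.swap p q).permMatrix ℝ)⁻¹ * L * (Equiv.swap p q).permMatrix ℝ = L) ↔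
    (∃ c : ℝ, (∀ p ∈ C, ∀ q ∈ C, p ≠ q → L p q = c) ∧
      (∀ p ∈ C, ∀ q ∈ C, ∀ j ∉ C, L p j = L q j)) := by
  have hsym' : ∀ i j, L i j = L j i := fun i j => by
    have := congrFun (congrFun hsym j) i
    simpa [Matrix.transpose_apply] using this
  constructor
  · intro h
    have key : ∀ p ∈ C, ∀ q ∈ C, ∀ i j, L (Equiv.swap p q i) (Equiv.swap p q j) = L i j :=
      fun p hp q hq => (swap_permMatrix_conj_iff N L p q).mp (h p hp q hq)
    have third : ∀ a ∈ C, ∀ b ∈ C, ∀ d ∈ C, a ≠ b → a ≠ d → b ≠ d → L a b = L a d := by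
      intro a ha b hb d hd hab had hbd
      have := key b hb d hd a b
      rw [Equiv.swap_apply_of_ne_of_ne hab had, Equiv.swap_apply_left] at this
      exact this.symm
    obtain ⟨p0, hp0, q0, hq0, hpq0⟩ := Finset.one_lt_card.mp hk
    refine ⟨L p0 q0, ?_, ?_⟩
    · have gen : ∀ x ∈ C, ∀ y ∈ C, ∀ a ∈ C, ∀ b ∈ C, x ≠ y → a ≠ b → L x y = L a b := by
        intro x hx y hy a ha b hb hxy hab
        by_cases hxa : x = a
        · subst hxa
          by_cases hyb : y = b
          · subst hyb; rfl
          · exact third x hx y hy b hb hxy hab hyb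
        · by_cases hya : y = a
          · subst hya
            rw [hsym' x y]
            by_cases hxb : x = b
            · subst hxb; rfl
            · exact third y hy x hx b hb (Ne.symm hxy) hab hxb
          · have h1 : L x y = L a y := by
              have := key x hx a ha x y
              rw [Equiv.swap_apply_left, Equiv.swap_apply_of_ne_of_ne (Ne.symm hxy) hya] at this
              exact this.symm
            rw [h1]
            by_cases hyb : y = b
            · subst hyb; rfl
            · exact third a ha y hy b hb (Ne.symm hya) hab hyb
      intro p hp q hq hpq
      exact gen p hp q hq p0 hp0 q0 hq0 hpq hpq0
    · intro p hp q hq j hj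
      by_cases hpq : p = q
      · subst hpq; rfl
      · have := key p hp q hq p j
        rw [Equiv.swap_apply_left,
          Equiv.swap_apply_of_ne_of_ne ((ne_of_mem_of_not_mem hp hj).symm)
            ((ne_of_mem_of_not_mem hq hj).symm)] at this
        exact this.symm
  · rintro ⟨c, hc, hsec⟩ p hp q hq
    rw [swap_permMatrix_conj_iff]
    by_cases hpq : p = q
    · subst hpq; simp
    have hdiag : L p p = L q q := by
      have split : ∀ x ∈ C, ∑ j, L x j =
          L x x + (C.card - 1 : ℝ) * c + ∑ j ∈ Cᶜ, L x j := by
        intro x hx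
        rw [← Finset.sum_add_sum_compl C]
        congr 1
        rw [← Finset.add_sum_erase _ _ hx]
        congr 1
        rw [Finset.sum_congr rfl (fun j hj => hc x hx j (Finset.mem_of_mem_erase hj)
          (Ne.symm (Finset.ne_of_mem_erase hj)))]
        rw [Finset.sum_const, nsmul_eq_mul, Finset.card_erase_of_mem hx]
        have h1 : 1 ≤ C.card := le_trans (by norm_num) hk
        push_cast [Nat.cast_sub h1]
        ring
      have hcomp : ∑ j ∈ Cᶜ, L p j = ∑ j ∈ Cᶜ, L q j :=
        Finset.sum_congr rfl fun j hj => hsec p hp q hq j (Finset.mem_compl.mp hj)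
      have e1 := split p hp
      have e2 := split q hq
      rw [hrow p] at e1
      rw [hrow q] at e2
      rw [hcomp] at e1
      linarith
    intro i j
    rcases eq_or_ne i p with hip | hip
    · rw [hip, Equiv.swap_apply_left]
      rcases eq_or_ne j p with hjp | hjp
      · rw [hjp, Equiv.swap_apply_left]; exact hdiag.symm
      rcases eq_or_ne j q with hjq | hjq
      · rw [hjq, Equiv.swap_apply_right]; exact hsym' q p
      · rw [Equiv.swap_apply_of_ne_of_ne hjp hjq]
        by_cases hjC : j ∈ C
        · rw [hc q hq j hjC (Ne.symm hjq), hc p hp j hjC (Ne.symm hjp)]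
        · exact (hsec p hp q hq j hjC).symm
    rcases eq_or_ne i q with hiq | hiq
    · rw [hiq, Equiv.swap_apply_right]
      rcases eq_or_ne j p with hjp | hjp
      · rw [hjp, Equiv.swap_apply_left]; exact hsym' p q
      rcases eq_or_ne j q with hjq | hjq
      · rw [hjq, Equiv.swap_apply_right]; exact hdiag
      · rw [Equiv.swap_apply_of_ne_of_ne hjp hjq]
        by_cases hjC : j ∈ C
        · rw [hc p hp j hjC (Ne.symm hjp), hc q hq j hjC (Ne.symm hjq)]
        · exact hsec p hp q hq j hjC
    · rw [Equiv.swap_apply_of_ne_of_ne hip hiq]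
      rcases eq_or_ne j p with hjp | hjp
      · rw [hjp, Equiv.swap_apply_left, hsym' i q, hsym' i p]
        by_cases hiC : i ∈ C
        · rw [hc q hq i hiC (Ne.symm hiq), hc p hp i hiC (Ne.symm hip)]
        · exact (hsec p hp q hq i hiC).symm
      rcases eq_or_ne j q with hjq | hjq
      · rw [hjq, Equiv.swap_apply_right, hsym' i p, hsym' i q]
        by_cases hiC : i ∈ C
        · rw [hc p hp i hiC (Ne.symm hip), hc q hq i hiC (Ne.symm hiq)]
        · exact hsec p hp q hq i hiC
      · rw [Equiv.swap_apply_of_ne_of_ne hjp hjq]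
end

section
/- Let L be an N×N real symmetric matrix with zero row sums and let C ⊆ {1,...,N} have k ≥ 2 elements. Suppose that there exists a constant c ∈ ℝ such that L_{pq} = c for all distinct p, q ∈ C, and that L_{pj} = L_{qj} for all p, q ∈ C and all j ∉ C. Then there exists λ ∈ ℝ such that Lu = λu for every u ∈ U; that is, the (k−1)-dimensional subspace U is contained in a single eigenspace of L. -/
/-- If the graph induced by C is complete with uniform weights or empty
(L p q = c for all distinct p, q ∈ C) and C is a strong equitable cluster of a real
symmetric N×N matrix L with zero row sums, then the whole subspace
U = {u : u_j = 0 for j ∉ C, ∑ u_i = 0} is contained in a single eigenspace of L. -/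
theorem uniform_clique_sec_gives_degenerate_eigenspace
    (N : ℕ) (L : Matrix (Fin N) (Fin N) ℝ)
    (hsym : L.IsSymm) (hrow : ∀ i, ∑ j, L i j = 0)
    (C : Finset (Fin N)) (hk : 2 ≤ C.card)
    (c : ℝ) (hc : ∀ p ∈ C, ∀ q ∈ C, p ≠ q → L p q = c)
    (hSEC : ∀ p ∈ C, ∀ q ∈ C, ∀ j ∉ C, L p j = L q j) :
    ∃ lam : ℝ, ∀ u : Fin N → ℝ, (∀ j ∉ C, u j = 0) → (∑ i, u i = 0) →
      L.mulVec u = lam • u := by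
  obtain ⟨p0, hp0⟩ : C.Nonempty := Finset.card_pos.mp (by omega)
  have hsym' : ∀ i j, L i j = L j i := fun i j => (hsym.apply j i)
  -- split of row sums
  have hsplit : ∀ p ∈ C, L p p + (C.card - 1 : ℕ) * c + ∑ j ∈ Cᶜ, L p j = 0 := by
    intro p hp
    have h1 : ∑ j ∈ C, L p j + ∑ j ∈ Cᶜ, L p j = ∑ j, L p j :=
      Finset.sum_add_sum_compl C _
    have h2 : ∑ j ∈ C, L p j = L p p + ∑ j ∈ C.erase p, L p j :=
      (Finset.add_sum_erase C _ hp).symm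
    have h3 : ∑ j ∈ C.erase p, L p j = (C.card - 1 : ℕ) * c := by
      rw [Finset.sum_congr rfl (fun j hj => hc p hp j (Finset.mem_of_mem_erase hj)
        (Ne.symm (Finset.ne_of_mem_erase hj)))]
      simp [Finset.card_erase_of_mem hp]
    rw [hrow p] at h1
    linarith [h1, h2, h3]
  have hdiag : ∀ p ∈ C, L p p = L p0 p0 := by
    intro p hp
    have h1 := hsplit p hp
    have h2 := hsplit p0 hp0
    have h3 : ∑ j ∈ Cᶜ, L p j = ∑ j ∈ Cᶜ, L p0 j :=
      Finset.sum_congr rfl (fun j hj => hSEC p hp p0 hp0 j (Finset.mem_compl.mp hj))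
    linarith
  refine ⟨L p0 p0 - c, fun u hu0 husum => ?_⟩
  have hsumC : ∑ j ∈ C, u j = 0 := by
    have h1 : ∑ j ∈ C, u j + ∑ j ∈ Cᶜ, u j = ∑ j, u j := Finset.sum_add_sum_compl C _
    have h2 : ∑ j ∈ Cᶜ, u j = 0 :=
      Finset.sum_eq_zero (fun j hj => hu0 j (Finset.mem_compl.mp hj))
    rw [husum] at h1; linarith
  funext i
  have hred : L.mulVec u i = ∑ j ∈ C, L i j * u j := by
    have h1 : ∑ j ∈ C, L i j * u j + ∑ j ∈ Cᶜ, L i j * u j = ∑ j, L i j * u j :=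
      Finset.sum_add_sum_compl C _
    have h2 : ∑ j ∈ Cᶜ, L i j * u j = 0 :=
      Finset.sum_eq_zero (fun j hj => by rw [hu0 j (Finset.mem_compl.mp hj), mul_zero])
    simp only [Matrix.mulVec, dotProduct]
    linarith
  rw [hred]
  simp only [Pi.smul_apply, smul_eq_mul]
  by_cases hi : i ∈ C
  · have h2 : ∑ j ∈ C, L i j * u j = L i i * u i + ∑ j ∈ C.erase i, c * u j := by
      rw [← Finset.add_sum_erase C _ hi]
      congr 1
      exact Finset.sum_congr rfl (fun j hj => by
        rw [hc i hi j (Finset.mem_of_mem_erase hj) (Ne.symm (Finset.ne_of_mem_erase hj))])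
    have h3 : ∑ j ∈ C.erase i, c * u j = c * (0 - u i) := by
      rw [← Finset.mul_sum]
      congr 1
      have := Finset.add_sum_erase C u hi
      linarith [hsumC]
    rw [h2, h3, hdiag i hi]
    ring
  · have h2 : ∑ j ∈ C, L i j * u j = L p0 i * ∑ j ∈ C, u j := by
      rw [Finset.mul_sum]
      exact Finset.sum_congr rfl (fun j hj => by
        rw [hsym' i j, hSEC j hj p0 hp0 i hi])
    rw [h2, hsumC, hu0 i hi]
    ring
end

section
/- Let L be an N×N real symmetric matrix with zero row sums and let C ⊆ {1,...,N} have k ≥ 2 elements. Suppose there exists λ ∈ ℝ such that Lu = λu for every u ∈ U. Then every permutation σ of {1,...,N} that fixes all indices outside C pointwise preserves L, i.e. its permutation matrix P satisfies P⁻¹LP = L. -/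
/-- If there is λ ∈ ℝ such that Lu = λu for every u in the subspace
U = {u : u_j = 0 for j ∉ C, ∑ u_i = 0}, then every permutation σ fixing all indices
outside C pointwise preserves L (P⁻¹LP = L for its permutation matrix P). -/
theorem degenerate_eigenspace_gives_symmetries
    (N : ℕ) (L : Matrix (Fin N) (Fin N) ℝ)
    (hsym : L.IsSymm) (hrow : ∀ i, ∑ j, L i j = 0)
    (C : Finset (Fin N)) (hk : 2 ≤ C.card)
    (lam : ℝ)
    (hU : ∀ u : Fin N → ℝ, (∀ j ∉ C, u j = 0) → (∑ i, u i = 0) →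
      L.mulVec u = lam • u) :
    ∀ σ : Equiv.Perm (Fin N), (∀ j ∉ C, σ j = j) →
      (σ.permMatrix ℝ)⁻¹ * L * σ.permMatrix ℝ = L := by
  intro σ hfix
  have hsym' : ∀ i j, L i j = L j i := fun i j => hsym.apply j i
  have hC : ∀ i, i ∈ C → σ i ∈ C := by
    intro i hi
    by_contra h
    have h2 : σ i = i := σ.injective (hfix _ h)
    rw [h2] at h; exact h hi
  -- key identity from the eigenvector hypothesis
  have key : ∀ a ∈ C, ∀ b ∈ C, ∀ i, L i a - L i b =
      lam * ((if i = a then (1:ℝ) else 0) - (if i = b then 1 else 0)) := by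
    intro a ha b hb i
    set u : Fin N → ℝ := fun x => (if x = a then (1:ℝ) else 0) - (if x = b then 1 else 0)
      with hu
    have h1 : ∀ j ∉ C, u j = 0 := by
      intro j hj
      have hja : j ≠ a := fun h => hj (h ▸ ha)
      have hjb : j ≠ b := fun h => hj (h ▸ hb)
      simp [hu, hja, hjb]
    have h2 : ∑ x, u x = 0 := by
      simp [hu, Finset.sum_sub_distrib, Finset.sum_ite_eq']
    have h3 := congrFun (hU u h1 h2) i
    have h4 : L.mulVec u i = L i a - L i b := by
      simp [Matrix.mulVec, dotProduct, hu, mul_sub, Finset.sum_sub_distrib,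
        mul_ite, mul_one, mul_zero, Finset.sum_ite_eq']
    rw [h4] at h3
    simpa [hu] using h3
  have hentry : ∀ i j, L (σ i) (σ j) = L i j := by
    intro i j
    by_cases hi : i ∈ C <;> by_cases hj : j ∈ C
    · -- both in C
      have k1 := key (σ j) (hC j hj) j hj (σ i)
      have k2 := key (σ i) (hC i hi) i hi j
      have e1 : L (σ i) j = L j (σ i) := hsym' _ _
      have e2 : L i j = L j i := hsym' _ _
      have r1 : (if σ i = σ j then (1:ℝ) else 0) = (if i = j then 1 else 0) := by
        simp [σ.injective.eq_iff]
      have r3 : (if j = σ i then (1:ℝ) else 0) = (if σ i = j then 1 else 0) := by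
        simp [eq_comm]
      have r4 : (if j = i then (1:ℝ) else 0) = (if i = j then 1 else 0) := by
        simp [eq_comm]
      rw [r1] at k1
      rw [r3, r4] at k2
      by_cases hij : i = j
      · subst hij
        by_cases hq : σ i = i
        · rw [hq]
        · rw [if_pos rfl, if_neg hq] at k1 k2
          linarith
      · by_cases hq : σ i = j
        · rw [if_neg hij, if_pos hq] at k1 k2
          linarith
        · rw [if_neg hij, if_neg hq] at k1 k2
          linarith
    · -- i ∈ C, j ∉ C
      rw [hfix j hj, hsym' (σ i) j, hsym' i j]
      have k1 := key (σ i) (hC i hi) i hi j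
      have hne1 : j ≠ σ i := fun h => hj (h ▸ hC i hi)
      have hne2 : j ≠ i := fun h => hj (h ▸ hi)
      simp [hne1, hne2] at k1
      linarith
    · -- i ∉ C, j ∈ C
      rw [hfix i hi]
      have k1 := key (σ j) (hC j hj) j hj i
      have hne1 : i ≠ σ j := fun h => hi (h ▸ hC j hj)
      have hne2 : i ≠ j := fun h => hi (h ▸ hj)
      simp [hne1, hne2] at k1
      linarith
    · rw [hfix i hi, hfix j hj]
  -- the inverse of the permutation matrix
  have hinv : (σ.permMatrix ℝ)⁻¹ = (σ⁻¹).permMatrix ℝ := by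
    apply Matrix.inv_eq_left_inv
    rw [PEquiv.toMatrix_toPEquiv_mul]
    ext i j
    simp [PEquiv.toMatrix_apply, Equiv.toPEquiv_apply, Matrix.one_apply,
      Equiv.apply_symm_apply, eq_comm]
  rw [hinv, PEquiv.toMatrix_toPEquiv_mul, PEquiv.mul_toMatrix_toPEquiv]
  ext i j
  simp only [Matrix.submatrix_apply, id]
  show L (σ⁻¹ i) (σ⁻¹ j) = L i j
  have := hentry (σ⁻¹ i) (σ⁻¹ j)
  simpa only [Equiv.Perm.inv_def, Equiv.apply_symm_apply] using this.symm
end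

section
/- Let L be an N×N real symmetric matrix, let j ≠ l be two indices in {1,...,N}, and suppose the transposition exchanging j and l preserves L (its permutation matrix P satisfies P⁻¹LP = L). If u ∈ ℝ^N satisfies Lu = λu for some λ ∈ ℝ and u_j ≠ u_l, then the vector e ∈ ℝ^N with e_j = 1, e_l = −1 and all other entries zero also satisfies Le = λe. -/
open Matrix

/-- If the transposition of j and l preserves a real symmetric matrix L,
and u is a λ-eigenvector of L with u j ≠ u l, then the vector e with e_j = 1,
e_l = −1 and all other entries 0 is also a λ-eigenvector of L. -/
theorem swap_invariance_gives_difference_eigenvector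
    (N : ℕ) (L : Matrix (Fin N) (Fin N) ℝ) (hsym : L.IsSymm)
    (j l : Fin N) (hjl : j ≠ l)
    (hswap : ((Equiv.swap j l).permMatrix ℝ)⁻¹ * L * (Equiv.swap j l).permMatrix ℝ = L)
    (u : Fin N → ℝ) (lam : ℝ) (hu : L.mulVec u = lam • u) (hne : u j ≠ u l) :
    L.mulVec (fun p : Fin N => (if p = j then 1 else if p = l then -1 else 0 : ℝ))
      = lam • (fun p : Fin N => (if p = j then 1 else if p = l then -1 else 0 : ℝ)) := by
  set σ := Equiv.swap j l with hσ
  set P : Matrix (Fin N) (Fin N) ℝ := σ.permMatrix ℝ with hP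
  have hdet : IsUnit P.det := by
    rw [Matrix.det_permutation]
    exact (Equiv.Perm.sign σ).isUnit.map (Int.castRingHom ℝ)
  have hcomm : L * P = P * L := by
    have h := congrArg (fun M => P * M) hswap
    simp only [← Matrix.mul_assoc, Matrix.mul_nonsing_inv _ hdet, Matrix.one_mul] at h
    exact h
  have hPmul : P.mulVec u = fun i => u (σ i) := by
    funext i
    simp [hP, Equiv.Perm.permMatrix, PEquiv.toMatrix, Matrix.mulVec, dotProduct,
      Equiv.toPEquiv_apply, eq_comm]
  have hv : L.mulVec (P.mulVec u) = lam • P.mulVec u := by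
    rw [Matrix.mulVec_mulVec, hcomm, ← Matrix.mulVec_mulVec, hu, Matrix.mulVec_smul]
  set c : ℝ := (u j - u l)⁻¹ with hc
  have he : (fun p : Fin N => (if p = j then 1 else if p = l then -1 else 0 : ℝ))
      = c • (u - P.mulVec u) := by
    funext p
    rw [hPmul]
    by_cases hpj : p = j
    · subst hpj
      simp [hσ, Equiv.swap_apply_left, hc, sub_ne_zero.mpr hne, hjl]
    · by_cases hpl : p = l
      · subst hpl
        simp only [hσ, Equiv.swap_apply_right, hpj, if_neg, if_pos, Pi.smul_apply,
          Pi.sub_apply, smul_eq_mul, if_false, if_true]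
        rw [show u p - u j = -(u j - u p) by ring, mul_neg,
          inv_mul_cancel₀ (sub_ne_zero.mpr hne)]
      · simp [hσ, Equiv.swap_apply_of_ne_of_ne hpj hpl, hpj, hpl]
  rw [he, Matrix.mulVec_smul, Matrix.mulVec_sub, hu, hv, smul_comm]
  congr 1
  funext p
  simp [mul_sub]
end

section
/- Let L be an N×N real symmetric matrix with zero row sums, let v₁, ..., v_N be an orthonormal basis of ℝ^N consisting of eigenvectors of L with v₁ = (1/√N)(1,1,...,1)ᵀ, let C ⊆ {1,...,N} have k ≥ 2 elements, and let S be a spectral block of k−1 of these eigenvectors localized at C. Then for every pair of distinct indices p, q ∈ C, one has Σ_{v ∈ S} (v_p − v_q)² = 2, where v_p and v_q denote the p-th and q-th entries of the eigenvector v. -/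
open Matrix

/-- If S is a spectral block of k−1 eigenvectors localized at a k-element
set C (within an orthonormal eigenbasis of L whose first vector is (1/√N)(1,...,1)ᵀ),
then ∑_{v ∈ S} (v_p − v_q)² = 2 for all distinct p, q ∈ C. -/
theorem spectral_block_entry_two
    (N : ℕ) [NeZero N] (L : Matrix (Fin N) (Fin N) ℝ)
    (hsym : L.IsSymm) (hrow : ∀ i, ∑ j, L i j = 0)
    (C : Finset (Fin N)) (hk : 2 ≤ C.card)
    (v : Fin N → (Fin N → ℝ)) (μ : Fin N → ℝ) (S : Finset (Fin N))
    (horth : ∀ i j, v i ⬝ᵥ v j = if i = j then 1 else 0)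
    (heig : ∀ i, L.mulVec (v i) = μ i • v i)
    (hv0 : v 0 = fun _ => 1 / Real.sqrt N)
    (hcard : S.card = C.card - 1) (h0S : (0 : Fin N) ∉ S)
    (hloc : ∀ i ∈ S, ∀ j ∉ C, v i j = 0)
    (hconst : ∀ i ∉ S, ∀ p ∈ C, ∀ q ∈ C, v i p = v i q) :
    ∀ p ∈ C, ∀ q ∈ C, p ≠ q → ∑ i ∈ S, (v i p - v i q) ^ 2 = 2 := by
  -- rows orthonormal ⇒ columns orthonormal
  set M : Matrix (Fin N) (Fin N) ℝ := Matrix.of v with hM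
  have h1 : M * Mᵀ = 1 := by
    ext i j
    simpa [Matrix.mul_apply, Matrix.one_apply, dotProduct, M] using horth i j
  have h2 : Mᵀ * M = 1 := mul_eq_one_comm.mp h1
  have key : ∀ p q : Fin N, ∑ i, v i p * v i q = if p = q then 1 else 0 := by
    intro p q
    have := congrFun (congrFun h2 p) q
    simpa [Matrix.mul_apply, Matrix.one_apply, M] using this
  intro p hp q hq hpq
  have hfull : ∑ i ∈ S, (v i p - v i q) ^ 2 = ∑ i, (v i p - v i q) ^ 2 :=
    Finset.sum_subset (Finset.subset_univ S)
      (fun i _ hi => by rw [hconst i hi p hp q hq]; ring)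
  rw [hfull]
  have expand : ∀ i : Fin N, (v i p - v i q) ^ 2
      = v i p * v i p + v i q * v i q - 2 * (v i p * v i q) := fun i => by ring
  simp only [expand]
  rw [Finset.sum_sub_distrib, Finset.sum_add_distrib, ← Finset.mul_sum,
    key p p, key q q, key p q]
  norm_num [hpq]
end
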